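/- Let K and H be finite groups whose orders are coprime. Then for every subgroup S of K × H, the normalizer of S in K × H equals the product of the normalizers of its projections: Subgroup.normalizer S = Subgroup.prod (Subgroup.normalizer S₁) (Subgroup.normalizer S₂). -/

import Mathlib

/-- If `n` is coprime to the order of `g`, then `g` is a power of `g ^ n`. -/
lemma exists_pow_pow_eq {G : Type*} [Group G] (g : G) {n : ℕ}
    (h : Nat.Coprime n (orderOf g)) (hpos : 0 < orderOf g) : ∃ m, (g ^ n) ^ m = g := by
  refine ⟨n ^ (Nat.totient (orderOf g) - 1), ?_⟩
  rw [← pow_mul]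
  have ht : 0 < Nat.totient (orderOf g) := Nat.totient_pos.mpr hpos
  have : n * n ^ (Nat.totient (orderOf g) - 1) = n ^ Nat.totient (orderOf g) := by
    rw [← pow_succ']
    congr 1
    omega
  rw [this]
  have hmod : n ^ Nat.totient (orderOf g) ≡ 1 [MOD orderOf g] := Nat.ModEq.pow_totient h
  calc g ^ n ^ Nat.totient (orderOf g) = g ^ 1 := (pow_eq_pow_iff_modEq).mpr hmod
    _ = g := pow_one g

/-- A subgroup of a product of finite groups of coprime order is the product of its
projections. -/
lemma subgroup_eq_prod_of_coprime {K H : Type*} [Group K] [Group H] [Finite K] [Finite H]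
    (hcop : Nat.Coprime (Nat.card K) (Nat.card H)) (S : Subgroup (K × H)) :
    S = (S.map (MonoidHom.fst K H)).prod (S.map (MonoidHom.snd K H)) := by
  have hK : ∀ k : K, k ∈ S.map (MonoidHom.fst K H) → ((k, 1) : K × H) ∈ S := by
    rintro k ⟨⟨k', h⟩, hmem, rfl⟩
    have h1 : (k', h) ^ Nat.card H = ((k' ^ Nat.card H, 1) : K × H) := by
      simp [Prod.pow_mk, pow_card_eq_one']
    have hd : Nat.Coprime (Nat.card H) (orderOf k') :=
      Nat.Coprime.coprime_dvd_right (orderOf_dvd_natCard k') hcop.symm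
    obtain ⟨m, hm⟩ := exists_pow_pow_eq k' hd (orderOf_pos k')
    have : ((k' ^ Nat.card H, 1) : K × H) ^ m ∈ S := by
      rw [← h1]
      exact S.pow_mem (S.pow_mem hmem _) m
    simpa [Prod.pow_mk, hm] using this
  have hH : ∀ h : H, h ∈ S.map (MonoidHom.snd K H) → ((1, h) : K × H) ∈ S := by
    rintro h ⟨⟨k, h'⟩, hmem, rfl⟩
    have h1 : (k, h') ^ Nat.card K = ((1, h' ^ Nat.card K) : K × H) := by
      simp [Prod.pow_mk, pow_card_eq_one']
    have hd : Nat.Coprime (Nat.card K) (orderOf h') :=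
      Nat.Coprime.coprime_dvd_right (orderOf_dvd_natCard h') hcop
    obtain ⟨m, hm⟩ := exists_pow_pow_eq h' hd (orderOf_pos h')
    have : ((1, h' ^ Nat.card K) : K × H) ^ m ∈ S := by
      rw [← h1]
      exact S.pow_mem (S.pow_mem hmem _) m
    simpa [Prod.pow_mk, hm] using this
  apply le_antisymm
  · rintro ⟨k, h⟩ hs
    exact ⟨⟨(k, h), hs, rfl⟩, ⟨(k, h), hs, rfl⟩⟩
  · rintro ⟨k, h⟩ ⟨hk, hh⟩
    have : ((k, h) : K × H) = (k, 1) * (1, h) := by simp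
    rw [this]
    exact S.mul_mem (hK k hk) (hH h hh)

/-- The normalizer of a product subgroup is the product of the normalizers. -/
lemma normalizer_prod {K H : Type*} [Group K] [Group H] (A : Subgroup K) (B : Subgroup H) :
    Subgroup.normalizer ((A.prod B : Subgroup (K × H)) : Set (K × H)) =
      (Subgroup.normalizer (A : Set K)).prod (Subgroup.normalizer (B : Set H)) := by
  ext ⟨a, b⟩
  simp only [Subgroup.mem_normalizer_iff, Subgroup.mem_prod]
  constructor
  · intro hp
    constructor
    · intro x
      have := hp (x, 1)
      simpa [Subgroup.one_mem] using this
    · intro y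
      have := hp (1, y)
      simpa [Subgroup.one_mem] using this
  · rintro ⟨hA, hB⟩ ⟨x, y⟩
    simp [Prod.mul_def, ← hA x, ← hB y]

/-- For finite groups `K`, `H` with coprime orders, the normalizer of a subgroup of
`K × H` is the product of the normalizers of its two projections (splitting of
Weyl groups). -/
theorem normalizer_of_subgroup_of_coprime_prod
    (K H : Type*) [Group K] [Group H] [Finite K] [Finite H]
    (hcop : Nat.Coprime (Nat.card K) (Nat.card H))
    (S : Subgroup (K × H)) :
    Subgroup.normalizer (S : Set (K × H)) =
      (Subgroup.normalizer ((S.map (MonoidHom.fst K H) : Subgroup K) : Set K)).prod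
        (Subgroup.normalizer ((S.map (MonoidHom.snd K H) : Subgroup H) : Set H)) := by
  conv_lhs => rw [subgroup_eq_prod_of_coprime hcop S]
  exact normalizer_prod _ _
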